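/- Let A be a dually pseudocomplemented Heyting algebra and a, b ∈ A. With β := (a ∨ a*)⁺, one has (a → b) ∨ β = (a → b) ∨ a⁺. -/
import Mathlib


theorem stmt9 (A : Type*) [HeytingAlgebra A] (p : A → A)
    (hp : ∀ x, x ⊔ p x = ⊤) (hleast : ∀ x z, x ⊔ z = ⊤ → p x ≤ z)
    (a b : A) : (a ⇨ b) ⊔ p (a ⊔ (a ⇨ (⊥ : A))) = (a ⇨ b) ⊔ p a := by
  apply le_antisymm
  · apply sup_le le_sup_left
    refine le_trans (hleast _ (p a) ?_) le_sup_right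
    rw [sup_assoc] at *
    rw [sup_comm (a ⇨ ⊥) (p a), ← sup_assoc]
    exact eq_top_iff.2 ((hp a).ge.trans le_sup_left)
  · apply sup_le le_sup_left
    refine hleast a _ ?_
    have h := hp (a ⊔ (a ⇨ (⊥ : A)))
    have hab : (a ⇨ (⊥ : A)) ≤ a ⇨ b := himp_le_himp_left bot_le
    rw [eq_top_iff]
    calc (⊤ : A) = a ⊔ (a ⇨ ⊥) ⊔ p (a ⊔ (a ⇨ ⊥)) := h.symm
      _ ≤ a ⊔ ((a ⇨ b) ⊔ p (a ⊔ (a ⇨ ⊥))) := by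
          rw [sup_assoc]
          exact sup_le_sup_left (sup_le_sup_right hab _) a
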